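/- Let H be a linear 3-uniform hypergraph on n vertices with linear density d = 3e(H)/binom(n,2) > 0, such that d(n−1) > 1. Then the average degree of the bow-tie graph B of H satisfies d^avg(B) ≥ 16 − 8n/(d(n−1)−1). -/

import Mathlib

open Finset

variable {V : Type*} [Fintype V] [DecidableEq V]

/-- The vertex set of the bow-tie graph: unordered pairs of hyperedges
intersecting in exactly one vertex. -/
def bowPairs (E : Finset (Finset V)) : Finset (Finset (Finset V)) :=
  (E.powersetCard 2).filter fun s => ∃ e ∈ s, ∃ f ∈ s, e ≠ f ∧ (e ∩ f).card = 1

/-- The adjacency relation of the bow-tie graph: `{e,f} ~ {f,g}` where `e, f, g` are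
distinct hyperedges pairwise intersecting in exactly one vertex with empty common
intersection. -/
def IsBowAdj (E : Finset (Finset V)) (s t : Finset (Finset V)) : Prop :=
  ∃ e f g, e ∈ E ∧ f ∈ E ∧ g ∈ E ∧ e ≠ f ∧ f ≠ g ∧ e ≠ g ∧
    (e ∩ f).card = 1 ∧ (f ∩ g).card = 1 ∧ (e ∩ g).card = 1 ∧ e ∩ f ∩ g = ∅ ∧
    s = {e, f} ∧ t = {f, g}

def hdeg (E : Finset (Finset V)) (v : V) : ℕ := (E.filter (fun e => v ∈ e)).card

lemma mem_bowPairs {E : Finset (Finset V)} {s : Finset (Finset V)} :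
    s ∈ bowPairs E ↔ ∃ e f, e ∈ E ∧ f ∈ E ∧ e ≠ f ∧ (e ∩ f).card = 1 ∧ s = {e, f} := by
  constructor
  · rintro hs
    simp only [bowPairs, mem_filter, mem_powersetCard] at hs
    obtain ⟨⟨hsub, hc⟩, e, he, f, hf, hef, hcard⟩ := hs
    refine ⟨e, f, hsub he, hsub hf, hef, hcard, ?_⟩
    obtain ⟨a, b, hab, rfl⟩ := card_eq_two.mp hc
    simp only [mem_insert, mem_singleton] at he hf
    rcases he with rfl | rfl <;> rcases hf with rfl | rfl <;> first
      | exact absurd rfl hef | rfl | exact pair_comm _ _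
  · rintro ⟨e, f, he, hf, hef, hcard, rfl⟩
    simp only [bowPairs, mem_filter, mem_powersetCard]
    refine ⟨⟨?_, card_eq_two.mpr ⟨e, f, hef, rfl⟩⟩, e, by simp, f, by simp, hef, hcard⟩
    intro x hx
    simp only [mem_insert, mem_singleton] at hx
    rcases hx with rfl | rfl <;> assumption

lemma card_bowPairs (E : Finset (Finset V))
    (hlinear : ∀ e ∈ E, ∀ f ∈ E, e ≠ f → (e ∩ f).card ≤ 1) :
    (bowPairs E).card = ∑ v, (hdeg E v).choose 2 := by
  have hdisj : ∀ x ∈ (univ : Finset V), ∀ y ∈ (univ : Finset V), x ≠ y →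
      Disjoint ((E.filter (fun e => x ∈ e)).powersetCard 2)
        ((E.filter (fun e => y ∈ e)).powersetCard 2) := by
    intro x _ y _ hxy
    rw [disjoint_left]
    intro s hs hs'
    rw [mem_powersetCard] at hs hs'
    obtain ⟨a, b, hab, rfl⟩ := card_eq_two.mp hs.2
    have ha := hs.1 (by simp : a ∈ ({a,b} : Finset (Finset V)))
    have hb := hs.1 (by simp : b ∈ ({a,b} : Finset (Finset V)))
    have ha' := hs'.1 (by simp : a ∈ ({a,b} : Finset (Finset V)))
    have hb' := hs'.1 (by simp : b ∈ ({a,b} : Finset (Finset V)))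
    simp only [mem_filter] at ha hb ha' hb'
    have h2 : ({x, y} : Finset V) ⊆ a ∩ b := by
      intro t ht; simp only [mem_insert, mem_singleton] at ht
      rcases ht with rfl | rfl <;> simp [mem_inter, ha.2, hb.2, ha'.2, hb'.2]
    have := (card_le_card h2).trans (hlinear a ha.1 b hb.1 hab)
    rw [card_insert_of_notMem (by simp [hxy]), card_singleton] at this
    omega
  have heq : bowPairs E = univ.biUnion
      (fun v => (E.filter (fun e => v ∈ e)).powersetCard 2) := by
    ext s
    rw [mem_bowPairs, mem_biUnion]
    constructor
    · rintro ⟨e, f, he, hf, hef, hcard, rfl⟩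
      obtain ⟨y, hy⟩ := card_eq_one.mp hcard
      refine ⟨y, mem_univ y, ?_⟩
      rw [mem_powersetCard]
      have hye : y ∈ e ∩ f := by rw [hy]; simp
      rw [mem_inter] at hye
      refine ⟨?_, card_eq_two.mpr ⟨e, f, hef, rfl⟩⟩
      intro t ht
      simp only [mem_insert, mem_singleton] at ht
      rcases ht with rfl | rfl <;> simp [mem_filter, he, hf, hye.1, hye.2]
    · rintro ⟨v, -, hs⟩
      rw [mem_powersetCard] at hs
      obtain ⟨e, f, hef, rfl⟩ := card_eq_two.mp hs.2
      have he := hs.1 (by simp : e ∈ ({e,f} : Finset (Finset V)))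
      have hf := hs.1 (by simp : f ∈ ({e,f} : Finset (Finset V)))
      simp only [mem_filter] at he hf
      refine ⟨e, f, he.1, hf.1, hef, le_antisymm (hlinear e he.1 f hf.1 hef) ?_, rfl⟩
      rw [Nat.one_le_iff_ne_zero, ← pos_iff_ne_zero, card_pos]
      exact ⟨v, mem_inter.mpr ⟨he.2, hf.2⟩⟩
  rw [heq, card_biUnion hdisj]
  simp [card_powersetCard, hdeg]

lemma sum_over_edges (E : Finset (Finset V)) (g : V → ℕ) :
    ∑ f ∈ E, ∑ z ∈ f, g z = ∑ v, hdeg E v * g v := by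
  have : ∀ f : Finset V, ∑ z ∈ f, g z = ∑ z : V, if z ∈ f then g z else 0 := by
    intro f; rw [← Finset.sum_filter, Finset.filter_univ_mem]
  simp_rw [this]
  rw [Finset.sum_comm]
  congr 1; ext v
  rw [hdeg, card_filter, Finset.sum_mul]
  congr 1; ext f
  split <;> simp

lemma sum_hdeg (E : Finset (Finset V)) (huniform : ∀ e ∈ E, e.card = 3) :
    ∑ v, hdeg E v = 3 * E.card := by
  have h := sum_over_edges E (fun _ => 1)
  simp only [mul_one] at h
  rw [← h, Finset.sum_congr rfl
    (fun f hf => by rw [Finset.sum_const, smul_eq_mul, mul_one, huniform f hf]),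
    Finset.sum_const, smul_eq_mul, mul_comm]

lemma two_mul_choose_two (k : ℕ) : 2 * k.choose 2 = k * (k - 1) := by
  induction k with
  | zero => rfl
  | succ n ih =>
    rw [Nat.choose_succ_succ, Nat.mul_add, ih, Nat.choose_one_right,
      Nat.succ_sub_one]
    cases n with
    | zero => rfl
    | succ p => rw [Nat.succ_sub_one]; ring

def badW (E : Finset (Finset V)) : Finset ((Finset V × Finset V) × V × V) :=
  ((E ×ˢ E) ×ˢ ((univ : Finset V) ×ˢ univ)).filter fun q =>
    q.1.1 ≠ q.1.2 ∧ (q.1.1 ∩ q.1.2).card = 1 ∧ q.2.1 ∈ q.1.1 ∧ q.2.1 ∉ q.1.2 ∧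
      q.2.2 ∈ q.1.2 ∧ q.2.2 ∉ q.1.1 ∧ ∀ g ∈ E, ¬(q.2.1 ∈ g ∧ q.2.2 ∈ g)

lemma mem_badW {E : Finset (Finset V)} {q : (Finset V × Finset V) × V × V} :
    q ∈ badW E ↔ q.1.1 ∈ E ∧ q.1.2 ∈ E ∧ q.1.1 ≠ q.1.2 ∧ (q.1.1 ∩ q.1.2).card = 1 ∧
      q.2.1 ∈ q.1.1 ∧ q.2.1 ∉ q.1.2 ∧ q.2.2 ∈ q.1.2 ∧ q.2.2 ∉ q.1.1 ∧
      ∀ g ∈ E, ¬(q.2.1 ∈ g ∧ q.2.2 ∈ g) := by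
  unfold badW
  simp only [mem_filter, mem_product, mem_univ, and_true, true_and]
  tauto

lemma badW_bound (E : Finset (Finset V))
    (huniform : ∀ e ∈ E, e.card = 3)
    (hlinear : ∀ e ∈ E, ∀ f ∈ E, e ≠ f → (e ∩ f).card ≤ 1) :
    (badW E).card + 6 * E.card + 4 * (∑ v, hdeg E v * hdeg E v)
      ≤ 6 * E.card * Fintype.card V := by
  classical
  set n := Fintype.card V
  -- fiberwise decomposition over (f, z)
  have hmap : ∀ q ∈ badW E, (q.1.2, q.2.2) ∈ E ×ˢ (univ : Finset V) := by
    intro q hq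
    rw [mem_badW] at hq
    simp [hq.2.1]
  have hdec := Finset.card_eq_sum_card_fiberwise hmap
  -- per-fiber bound
  have key : ∀ f ∈ E, ∀ z ∈ f,
      ((badW E).filter (fun q => (q.1.2, q.2.2) = (f, z))).card + (2 + 4 * hdeg E z)
        ≤ 2 * n := by
    intro f hf z hz
    set Γ : Finset V := (E.filter (fun g => z ∈ g)).biUnion (fun g => g.erase z) with hΓ
    have hzΓ : z ∉ Γ := by simp [hΓ]
    have hΓcard : Γ.card = 2 * hdeg E z := by
      rw [hΓ, card_biUnion]
      · rw [Finset.sum_congr rfl (fun g hg => ?_), Finset.sum_const, smul_eq_mul, hdeg,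
          mul_comm]
        rw [mem_filter] at hg
        rw [card_erase_of_mem hg.2, huniform g hg.1]
      · intro g hg g' hg' hgg'
        rw [mem_coe, mem_filter] at hg hg'
        simp only [Function.onFun]
        rw [disjoint_left]
        intro w hw hw'
        rw [mem_erase] at hw hw'
        have : ({w, z} : Finset V) ⊆ g ∩ g' := by
          intro t ht; simp only [mem_insert, mem_singleton] at ht
          rcases ht with rfl | rfl <;> simp [mem_inter, hw.2, hw'.2, hg.2, hg'.2]
        have h2 := (card_le_card this).trans (hlinear g hg.1 g' hg'.1 hgg')
        rw [card_insert_of_notMem (by simp [hw.1]), card_singleton] at h2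
        omega
    set K : Finset V := insert z Γ with hK
    have hKcard : K.card = 1 + 2 * hdeg E z := by
      rw [hK, card_insert_of_notMem hzΓ, hΓcard]; omega
    -- injection into (univ \ K) ×ˢ (f.erase z)
    have hfib : ((badW E).filter (fun q => (q.1.2, q.2.2) = (f, z))).card
        ≤ ((univ \ K) ×ˢ (f.erase z)).card := by
      apply Finset.card_le_card_of_injOn
        (fun q => (q.2.1, if h : (q.1.1 ∩ f).Nonempty then h.choose else z))
      · intro q hq
        rw [mem_coe, mem_filter] at hq
        obtain ⟨hq, hq2⟩ := hq
        rw [mem_badW] at hq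
        rw [Prod.mk.injEq] at hq2
        obtain ⟨he, hfE, hef, hcard, hx, hxf, hzf, hze, hnog⟩ := hq
        rw [hq2.1] at hcard hxf hef
        have hne : (q.1.1 ∩ f).Nonempty := by
          rw [← card_pos, hcard]; omega
        beta_reduce
        rw [dif_pos hne]
        have hy := hne.choose_spec
        rw [mem_inter] at hy
        rw [mem_coe, mem_product, mem_sdiff, mem_erase]
        refine ⟨⟨mem_univ _, ?_⟩, ?_, hy.2⟩
        · rw [hK, mem_insert]
          push_neg
          constructor
          · exact fun hxz => hxf (hxz ▸ hz)
          · rw [hΓ, mem_biUnion]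
            push_neg
            intro g hg hxg
            rw [mem_filter] at hg
            rw [mem_erase] at hxg
            exact hnog g hg.1 ⟨hxg.2, by rw [hq2.2]; exact hg.2⟩
        · exact fun hyz => hze (by rw [hq2.2, ← hyz]; exact hy.1)
      · intro q hq q' hq' heq
        simp only [Finset.coe_filter, Set.mem_setOf_eq] at hq hq'
        obtain ⟨hq, hq2⟩ := hq
        obtain ⟨hq', hq2'⟩ := hq'
        rw [mem_badW] at hq hq'
        rw [Prod.mk.injEq] at hq2 hq2' heq
        obtain ⟨he, hfE, hef, hcard, hx, hxf, hzf, hze, hnog⟩ := hq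
        obtain ⟨he', hfE', hef', hcard', hx', hxf', hzf', hze', hnog'⟩ := hq'
        rw [hq2.1] at hcard hxf
        rw [hq2'.1] at hcard' hxf'
        have hne : (q.1.1 ∩ f).Nonempty := by rw [← card_pos, hcard]; omega
        have hne' : (q'.1.1 ∩ f).Nonempty := by rw [← card_pos, hcard']; omega
        rw [dif_pos hne, dif_pos hne'] at heq
        have hy := hne.choose_spec
        have hy' := hne'.choose_spec
        rw [mem_inter] at hy hy'
        have hxx : q.2.1 = q'.2.1 := heq.1
        have hyy : hne.choose = hne'.choose := heq.2
        have hee : q.1.1 = q'.1.1 := by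
          by_contra hne''
          have hsub : ({q.2.1, hne.choose} : Finset V) ⊆ q.1.1 ∩ q'.1.1 := by
            intro t ht; simp only [mem_insert, mem_singleton] at ht
            rcases ht with rfl | rfl
            · rw [mem_inter]; exact ⟨hx, by rw [hxx]; exact hx'⟩
            · rw [mem_inter]; exact ⟨hy.1, by rw [hyy]; exact hy'.1⟩
          have h2 := (card_le_card hsub).trans (hlinear _ he _ he' hne'')
          have hxy : q.2.1 ≠ hne.choose := fun h => hxf (h ▸ hy.2)
          rw [card_insert_of_notMem (by simp [hxy]), card_singleton] at h2
          omega
        have h1 : q.1 = q'.1 := Prod.ext hee (hq2.1.trans hq2'.1.symm)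
        have h2 : q.2 = q'.2 := Prod.ext hxx (hq2.2.trans hq2'.2.symm)
        exact Prod.ext h1 h2
    have hfz : (f.erase z).card = 2 := by
      rw [card_erase_of_mem hz, huniform f hf]
    have hKuniv : (univ \ K).card + K.card = n := by
      rw [card_sdiff_of_subset (subset_univ K)]
      have := card_le_card (subset_univ K)
      simp only [card_univ] at *
      omega
    rw [card_product, hfz] at hfib
    omega
  -- assemble
  rw [hdec]
  rw [Finset.sum_product]
  have hzero : ∀ f ∈ E, ∑ z : V, ((badW E).filter (fun q => (q.1.2, q.2.2) = (f, z))).card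
      = ∑ z ∈ f, ((badW E).filter (fun q => (q.1.2, q.2.2) = (f, z))).card := by
    intro f hf
    rw [← Finset.sum_subset (subset_univ f)]
    intro z _ hzf
    rw [Finset.card_eq_zero, Finset.filter_eq_empty_iff]
    intro q hq
    rw [mem_badW] at hq
    rw [Prod.mk.injEq]
    rintro ⟨rfl, rfl⟩
    exact hzf hq.2.2.2.2.2.2.1
  rw [Finset.sum_congr rfl hzero]
  have hsum2 : ∑ f ∈ E, ∑ z ∈ f, (2 + 4 * hdeg E z) = 6 * E.card + 4 * ∑ v, hdeg E v * hdeg E v := by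
    rw [sum_over_edges]
    have : ∀ v, hdeg E v * (2 + 4 * hdeg E v) = 2 * hdeg E v + 4 * (hdeg E v * hdeg E v) := by
      intro v; ring
    rw [Finset.sum_congr rfl (fun v _ => this v), Finset.sum_add_distrib, ← Finset.mul_sum,
      ← Finset.mul_sum, sum_hdeg E huniform]
    ring
  have hfinal : ∑ f ∈ E, ∑ z ∈ f, (((badW E).filter
        (fun q => (q.1.2, q.2.2) = (f, z))).card + (2 + 4 * hdeg E z))
      ≤ ∑ f ∈ E, ∑ z ∈ f, 2 * n := by
    refine Finset.sum_le_sum (fun f hf => Finset.sum_le_sum (fun z hz => key f hf z hz))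
  have hRHS : ∑ f ∈ E, ∑ z ∈ f, 2 * n = 6 * E.card * n := by
    rw [Finset.sum_congr rfl (fun f hf => by
      rw [Finset.sum_const, smul_eq_mul, huniform f hf]), Finset.sum_const, smul_eq_mul]
    ring
  have hLHS : ∑ f ∈ E, ∑ z ∈ f, (((badW E).filter
        (fun q => (q.1.2, q.2.2) = (f, z))).card + (2 + 4 * hdeg E z))
      = (∑ f ∈ E, ∑ z ∈ f, ((badW E).filter (fun q => (q.1.2, q.2.2) = (f, z))).card)
        + (6 * E.card + 4 * ∑ v, hdeg E v * hdeg E v) := by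
    rw [← hsum2, ← Finset.sum_add_distrib]
    congr 1; ext f
    rw [← Finset.sum_add_distrib]
  rw [hLHS, hRHS] at hfinal
  omega

set_option maxHeartbeats 1000000 in
lemma deg_bound (E : Finset (Finset V))
    (huniform : ∀ e ∈ E, e.card = 3)
    (hlinear : ∀ e ∈ E, ∀ f ∈ E, e ≠ f → (e ∩ f).card ≤ 1)
    (B : SimpleGraph ↥(bowPairs E)) [DecidableRel B.Adj]
    (hB : ∀ s t : ↥(bowPairs E), B.Adj s t ↔ IsBowAdj E ↑s ↑t)
    (p : Finset (Finset V)) (hp : p ∈ bowPairs E) :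
    8 ≤ B.degree ⟨p, hp⟩ +
      ((badW E).filter (fun q => ({q.1.1, q.1.2} : Finset (Finset V)) = p)).card := by
  classical
  obtain ⟨e, f, he, hf, hef, hcard, rfl⟩ := mem_bowPairs.mp hp
  obtain ⟨y, hy⟩ := card_eq_one.mp hcard
  have hye : y ∈ e := by have : y ∈ e ∩ f := by rw [hy]; simp
                         exact (mem_inter.mp this).1
  have hyf : y ∈ f := by have : y ∈ e ∩ f := by rw [hy]; simp
                         exact (mem_inter.mp this).2
  set X : Finset (V × V) := (e \ f) ×ˢ (f \ e) with hXdef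
  have hXcard : X.card = 4 := by
    rw [hXdef, card_product]
    have h1 : (e \ f).card = 2 := by
      rw [← Finset.sdiff_inter_self_left e f, card_sdiff_of_subset inter_subset_left,
        huniform e he, hcard]
    have h2 : (f \ e).card = 2 := by
      rw [← Finset.sdiff_inter_self_left f e, card_sdiff_of_subset inter_subset_left,
        huniform f hf, inter_comm, hcard]
    rw [h1, h2]
  set Xc := X.filter (fun w => ∃ g, g ∈ E ∧ w.1 ∈ g ∧ w.2 ∈ g) with hXcdef
  set Xu := X.filter (fun w => ¬ ∃ g, g ∈ E ∧ w.1 ∈ g ∧ w.2 ∈ g) with hXudef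
  have hsplit : Xc.card + Xu.card = 4 := by
    rw [hXcdef, hXudef, Finset.card_filter_add_card_filter_not, hXcard]
  -- generic facts about members of X
  have hXfacts : ∀ w ∈ X, w.1 ∈ e ∧ w.1 ∉ f ∧ w.2 ∈ f ∧ w.2 ∉ e := by
    intro w hw
    rw [hXdef, mem_product, mem_sdiff, mem_sdiff] at hw
    exact ⟨hw.1.1, hw.1.2, hw.2.1, hw.2.2⟩
  ---- fiber bound : 2 * Xu.card ≤ fiber card
  set FW := (badW E).filter
      (fun q => ({q.1.1, q.1.2} : Finset (Finset V)) = {e, f}) with hFWdef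
  have hfib : 2 * Xu.card ≤ FW.card := by
    set A1 := Xu.image (fun w => ((e, f), w)) with hA1
    set A2 := Xu.image (fun w => ((f, e), (w.2, w.1))) with hA2
    have hA1card : A1.card = Xu.card := card_image_of_injective _ (by
      intro a b h
      exact congrArg Prod.snd h)
    have hA2card : A2.card = Xu.card := card_image_of_injective _ (by
      intro a b h
      have h2 : (a.2, a.1) = (b.2, b.1) := congrArg Prod.snd h
      rw [Prod.mk.injEq] at h2
      exact Prod.ext h2.2 h2.1)
    have hdisj : Disjoint A1 A2 := by
      rw [disjoint_left]
      intro q hq1 hq2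
      rw [hA1, mem_image] at hq1
      rw [hA2, mem_image] at hq2
      obtain ⟨w, -, rfl⟩ := hq1
      obtain ⟨w', -, h⟩ := hq2
      rw [Prod.mk.injEq, Prod.mk.injEq] at h
      exact hef h.1.1.symm
    have hsub : A1 ∪ A2 ⊆ FW := by
      intro q hq
      rw [mem_union] at hq
      rcases hq with hq | hq
      · rw [hA1, mem_image] at hq
        obtain ⟨w, hw, rfl⟩ := hq
        rw [hXudef, mem_filter] at hw
        obtain ⟨hwX, hwu⟩ := hw
        obtain ⟨h1, h2, h3, h4⟩ := hXfacts w hwX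
        rw [hFWdef, mem_filter, mem_badW]
        refine ⟨⟨he, hf, hef, hcard, h1, h2, h3, h4, ?_⟩, rfl⟩
        intro g hg hcontra
        exact hwu ⟨g, hg, hcontra.1, hcontra.2⟩
      · rw [hA2, mem_image] at hq
        obtain ⟨w, hw, rfl⟩ := hq
        rw [hXudef, mem_filter] at hw
        obtain ⟨hwX, hwu⟩ := hw
        obtain ⟨h1, h2, h3, h4⟩ := hXfacts w hwX
        rw [hFWdef, mem_filter, mem_badW]
        refine ⟨⟨hf, he, hef.symm, by rw [inter_comm]; exact hcard, h3, h4, h1, h2, ?_⟩,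
          pair_comm f e⟩
        intro g hg hcontra
        exact hwu ⟨g, hg, hcontra.2, hcontra.1⟩
    calc 2 * Xu.card = A1.card + A2.card := by rw [hA1card, hA2card]; ring
    _ = (A1 ∪ A2).card := (card_union_of_disjoint hdisj).symm
    _ ≤ FW.card := card_le_card hsub
  ---- degree bound : 2 * Xc.card ≤ degree
  set gsel : V × V → Finset V := fun w =>
    if h : ∃ g, g ∈ E ∧ w.1 ∈ g ∧ w.2 ∈ g then h.choose else e with hgsel
  have hgspec : ∀ w ∈ Xc, gsel w ∈ E ∧ w.1 ∈ gsel w ∧ w.2 ∈ gsel w := by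
    intro w hw
    rw [hXcdef, mem_filter] at hw
    rw [hgsel]
    simp only
    rw [dif_pos hw.2]
    exact hw.2.choose_spec
  have hgfacts : ∀ w ∈ Xc, gsel w ≠ e ∧ gsel w ≠ f ∧
      (e ∩ gsel w).card = 1 ∧ (f ∩ gsel w).card = 1 ∧ y ∉ gsel w := by
    intro w hw
    have hwX : w ∈ X := (mem_filter.mp (hXcdef ▸ hw)).1
    obtain ⟨h1, h2, h3, h4⟩ := hXfacts w hwX
    obtain ⟨hgE, hxg, hzg⟩ := hgspec w hw
    have hge : gsel w ≠ e := fun h => h4 (h ▸ hzg)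
    have hgf : gsel w ≠ f := fun h => h2 (h ▸ hxg)
    have hcad1 : (e ∩ gsel w).card = 1 := by
      refine le_antisymm (hlinear e he _ hgE (Ne.symm hge)) ?_
      rw [Nat.one_le_iff_ne_zero, ← pos_iff_ne_zero, card_pos]
      exact ⟨w.1, mem_inter.mpr ⟨h1, hxg⟩⟩
    have hcad2 : (f ∩ gsel w).card = 1 := by
      refine le_antisymm (hlinear f hf _ hgE (Ne.symm hgf)) ?_
      rw [Nat.one_le_iff_ne_zero, ← pos_iff_ne_zero, card_pos]
      exact ⟨w.2, mem_inter.mpr ⟨h3, hzg⟩⟩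
    refine ⟨hge, hgf, hcad1, hcad2, ?_⟩
    intro hyg
    have hsub : ({w.1, y} : Finset V) ⊆ e ∩ gsel w := by
      intro t ht; simp only [mem_insert, mem_singleton] at ht
      rcases ht with rfl | rfl
      · exact mem_inter.mpr ⟨h1, hxg⟩
      · exact mem_inter.mpr ⟨hye, hyg⟩
    have hxy : w.1 ≠ y := fun h => h2 (h ▸ hyf)
    have := (card_le_card hsub).trans_eq hcad1
    rw [card_insert_of_notMem (by simp [hxy]), card_singleton] at this
    omega
  have hdeg : 2 * Xc.card ≤ B.degree ⟨{e, f}, hp⟩ := by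
    set v : ↥(bowPairs E) := ⟨{e, f}, hp⟩ with hv
    set Nv := (B.neighborFinset v).image (Subtype.val) with hNv
    have hNvcard : Nv.card = B.degree v := by
      rw [hNv, card_image_of_injective _ Subtype.val_injective]
      rfl
    have hadj1 : ∀ w ∈ Xc, ({f, gsel w} : Finset (Finset V)) ∈ Nv := by
      intro w hw
      obtain ⟨hgE, hxg, hzg⟩ := hgspec w hw
      obtain ⟨hge, hgf, hc1, hc2, hyg⟩ := hgfacts w hw
      have hmem : ({f, gsel w} : Finset (Finset V)) ∈ bowPairs E :=
        mem_bowPairs.mpr ⟨f, gsel w, hf, hgE, Ne.symm hgf, hc2, rfl⟩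
      rw [hNv, mem_image]
      refine ⟨⟨{f, gsel w}, hmem⟩, ?_, rfl⟩
      rw [SimpleGraph.mem_neighborFinset, hB]
      exact ⟨e, f, gsel w, he, hf, hgE, hef, Ne.symm hgf, Ne.symm hge, hcard, hc2,
        hc1, by rw [hy]; exact Finset.singleton_inter_of_notMem hyg, rfl, rfl⟩
    have hadj2 : ∀ w ∈ Xc, ({e, gsel w} : Finset (Finset V)) ∈ Nv := by
      intro w hw
      obtain ⟨hgE, hxg, hzg⟩ := hgspec w hw
      obtain ⟨hge, hgf, hc1, hc2, hyg⟩ := hgfacts w hw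
      have hmem : ({e, gsel w} : Finset (Finset V)) ∈ bowPairs E :=
        mem_bowPairs.mpr ⟨e, gsel w, he, hgE, Ne.symm hge, hc1, rfl⟩
      rw [hNv, mem_image]
      refine ⟨⟨{e, gsel w}, hmem⟩, ?_, rfl⟩
      rw [SimpleGraph.mem_neighborFinset, hB]
      refine ⟨f, e, gsel w, hf, he, hgE, hef.symm, Ne.symm hge, Ne.symm hgf,
        by rw [inter_comm]; exact hcard, hc1, hc2, ?_, pair_comm e f, rfl⟩
      rw [inter_comm f e, hy]
      exact Finset.singleton_inter_of_notMem hyg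
    set C1 := Xc.image (fun w => ({f, gsel w} : Finset (Finset V))) with hC1
    set C2 := Xc.image (fun w => ({e, gsel w} : Finset (Finset V))) with hC2
    have hinj : ∀ (a : Finset V), (a = e ∨ a = f) →
        Set.InjOn (fun w => ({a, gsel w} : Finset (Finset V))) Xc := by
      intro a ha w hw w' hw' h
      simp only at h
      obtain ⟨hgE, hxg, hzg⟩ := hgspec w hw
      obtain ⟨hgE', hxg', hzg'⟩ := hgspec w' hw'
      obtain ⟨hge, hgf, hc1, hc2, hyg⟩ := hgfacts w hw
      obtain ⟨hge', hgf', hc1', hc2', hyg'⟩ := hgfacts w' hw'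
      have hgg : gsel w = gsel w' := by
        have hga : gsel w ≠ a := by rcases ha with rfl | rfl <;> assumption
        have : gsel w ∈ ({a, gsel w'} : Finset (Finset V)) := by
          rw [← h]; simp
        simp only [mem_insert, mem_singleton] at this
        tauto
      have hw1 : w.1 = w'.1 := by
        have hu := Finset.card_le_one.mp hc1.le
        obtain ⟨hX1, -, -, -⟩ := hXfacts w (mem_filter.mp (hXcdef ▸ hw)).1
        obtain ⟨hX1', -, -, -⟩ := hXfacts w' (mem_filter.mp (hXcdef ▸ hw')).1
        exact hu _ (mem_inter.mpr ⟨hX1, hxg⟩) _ (mem_inter.mpr ⟨hX1', hgg ▸ hxg'⟩)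
      have hw2 : w.2 = w'.2 := by
        have hu := Finset.card_le_one.mp hc2.le
        obtain ⟨-, -, hX3, -⟩ := hXfacts w (mem_filter.mp (hXcdef ▸ hw)).1
        obtain ⟨-, -, hX3', -⟩ := hXfacts w' (mem_filter.mp (hXcdef ▸ hw')).1
        exact hu _ (mem_inter.mpr ⟨hX3, hzg⟩) _ (mem_inter.mpr ⟨hX3', hgg ▸ hzg'⟩)
      exact Prod.ext hw1 hw2
    have hC1card : C1.card = Xc.card := Finset.card_image_of_injOn (hinj f (Or.inr rfl))
    have hC2card : C2.card = Xc.card := Finset.card_image_of_injOn (hinj e (Or.inl rfl))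
    have hdisjC : Disjoint C1 C2 := by
      rw [disjoint_left]
      intro t ht1 ht2
      rw [hC1, mem_image] at ht1
      rw [hC2, mem_image] at ht2
      obtain ⟨w, hw, rfl⟩ := ht1
      obtain ⟨w', hw', h⟩ := ht2
      obtain ⟨hge, hgf, -, -, -⟩ := hgfacts w hw
      have : e ∈ ({f, gsel w} : Finset (Finset V)) := by rw [← h]; simp
      simp only [mem_insert, mem_singleton] at this
      rcases this with h' | h'
      · exact hef h'
      · exact hge h'.symm
    have hsubC : C1 ∪ C2 ⊆ Nv := by
      intro t ht
      rw [mem_union] at ht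
      rcases ht with ht | ht
      · rw [hC1, mem_image] at ht
        obtain ⟨w, hw, rfl⟩ := ht
        exact hadj1 w hw
      · rw [hC2, mem_image] at ht
        obtain ⟨w, hw, rfl⟩ := ht
        exact hadj2 w hw
    calc 2 * Xc.card = C1.card + C2.card := by rw [hC1card, hC2card]; ring
    _ = (C1 ∪ C2).card := (card_union_of_disjoint hdisjC).symm
    _ ≤ Nv.card := card_le_card hsubC
    _ = B.degree v := hNvcard
  omega

lemma global_bound (E : Finset (Finset V))
    (huniform : ∀ e ∈ E, e.card = 3)
    (hlinear : ∀ e ∈ E, ∀ f ∈ E, e ≠ f → (e ∩ f).card ≤ 1)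
    (B : SimpleGraph ↥(bowPairs E)) [DecidableRel B.Adj]
    (hB : ∀ s t : ↥(bowPairs E), B.Adj s t ↔ IsBowAdj E ↑s ↑t) :
    8 * (bowPairs E).card ≤ 2 * B.edgeFinset.card + (badW E).card := by
  classical
  have hW : (badW E).card = ∑ p ∈ bowPairs E,
      ((badW E).filter (fun q => ({q.1.1, q.1.2} : Finset (Finset V)) = p)).card := by
    apply Finset.card_eq_sum_card_fiberwise
    intro q hq
    rw [mem_coe, mem_badW] at hq
    exact mem_bowPairs.mpr ⟨q.1.1, q.1.2, hq.1, hq.2.1, hq.2.2.1, hq.2.2.2.1, rfl⟩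
  have hdegsum : ∑ p ∈ (bowPairs E).attach, B.degree p = 2 * B.edgeFinset.card := by
    rw [← SimpleGraph.sum_degrees_eq_twice_card_edges, Finset.univ_eq_attach]
  have hfibsum : ∑ p ∈ (bowPairs E).attach,
      ((badW E).filter (fun q => ({q.1.1, q.1.2} : Finset (Finset V)) = ↑p)).card
      = (badW E).card := by
    rw [hW]
    apply Finset.sum_bij
      (fun (p : {x // x ∈ bowPairs E}) (_ : p ∈ (bowPairs E).attach) => (p : Finset (Finset V)))
    · intro a _; exact a.2
    · intro a _ b _ h; exact Subtype.ext h
    · intro b hb; exact ⟨⟨b, hb⟩, mem_attach _ _, rfl⟩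
    · intro a _; rfl
  calc 8 * (bowPairs E).card = ∑ _p ∈ (bowPairs E).attach, 8 := by
        rw [Finset.sum_const, card_attach, smul_eq_mul, mul_comm]
  _ ≤ ∑ p ∈ (bowPairs E).attach, (B.degree p +
        ((badW E).filter (fun q => ({q.1.1, q.1.2} : Finset (Finset V)) = ↑p)).card) := by
      apply Finset.sum_le_sum
      intro p _
      exact deg_bound E huniform hlinear B hB ↑p p.2
  _ = 2 * B.edgeFinset.card + (badW E).card := by
      rw [Finset.sum_add_distrib, hdegsum, hfibsum]

lemma final_arith (nn mm SS PP WW ee : ℝ)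
    (r1 : 8*PP ≤ 2*ee + WW)
    (r2 : WW + 6*mm + 4*SS ≤ 6*mm*nn)
    (r3 : 3*mm*(3*mm) ≤ nn*SS)
    (r4 : SS = 2*PP + 3*mm)
    (hP0 : 0 < PP) (hm0 : 0 ≤ mm) (he0 : 0 ≤ ee) (hW0 : 0 ≤ WW) (hn2 : 2 ≤ nn)
    (hmn : nn < 6*mm) :
    16 - 8*nn/((6*mm - nn)/nn) ≤ 2*ee/PP := by
  have hn0 : (0:ℝ) < nn := by linarith
  have h6mn : (0:ℝ) < 6*mm - nn := by linarith
  have hrw : 8*nn/((6*mm - nn)/nn) = 8*nn^2/(6*mm - nn) := by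
    rw [div_div_eq_mul_div]
    ring_nf
  rw [hrw, ← sub_nonneg]
  have hexp : 2*ee/PP - (16 - 8*nn^2/(6*mm - nn))
      = (2*ee*(6*mm - nn) + 8*nn^2*PP - 16*PP*(6*mm - nn)) / (PP*(6*mm - nn)) := by
    field_simp
    ring
  rw [hexp]
  apply div_nonneg _ (by positivity)
  have t2eB : 2*ee ≥ 16*PP + 18*mm - 6*mm*nn := by linarith
  have r3' : 3*mm*(3*mm) ≤ nn*(2*PP+3*mm) := by rw [← r4]; exact r3
  have hPn : 2*PP*nn ≥ 9*mm^2 - 3*mm*nn := by nlinarith [r3']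
  have key2 : 0 ≤ (4*PP+3*mm) * (2*ee*(6*mm-nn) + 8*nn^2*PP - 16*PP*(6*mm-nn)) := by
    nlinarith [mul_nonneg (mul_nonneg hm0 he0) h6mn.le,
      mul_nonneg (mul_nonneg hP0.le h6mn.le)
        (by linarith : (0:ℝ) ≤ 2*ee - (16*PP+18*mm-6*mm*nn)),
      mul_nonneg (mul_nonneg hn0.le hP0.le)
        (by linarith : (0:ℝ) ≤ 2*PP*nn - (9*mm^2-3*mm*nn)),
      mul_nonneg (mul_nonneg hm0 hP0.le) h6mn.le]
  nlinarith [key2, hP0, hm0]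

theorem stmt_16 (E : Finset (Finset V)) (d : ℝ)
    (huniform : ∀ e ∈ E, e.card = 3)
    (hlinear : ∀ e ∈ E, ∀ f ∈ E, e ≠ f → (e ∩ f).card ≤ 1)
    (hn : 2 ≤ Fintype.card V)
    (hpairs : (bowPairs E).Nonempty)
    (hd : d = (3 * E.card : ℝ) / ((Fintype.card V).choose 2))
    (hd0 : 0 < d)
    (hd1 : d * ((Fintype.card V : ℝ) - 1) > 1)
    (B : SimpleGraph ↥(bowPairs E)) [DecidableRel B.Adj]
    (hB : ∀ s t : ↥(bowPairs E), B.Adj s t ↔ IsBowAdj E ↑s ↑t) :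
    2 * (B.edgeFinset.card : ℝ) / (bowPairs E).card ≥
      16 - 8 * (Fintype.card V : ℝ) / (d * ((Fintype.card V : ℝ) - 1) - 1) := by
  classical
  have f1 : 8 * (bowPairs E).card ≤ 2 * B.edgeFinset.card + (badW E).card :=
    global_bound E huniform hlinear B hB
  have f2 : (badW E).card + 6 * E.card + 4 * (∑ v, hdeg E v * hdeg E v)
      ≤ 6 * E.card * Fintype.card V := badW_bound E huniform hlinear
  have f3 : 3 * E.card * (3 * E.card) ≤ Fintype.card V * (∑ v, hdeg E v * hdeg E v) := by
    have h := sq_sum_le_card_mul_sum_sq (s := (univ : Finset V)) (f := hdeg E)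
    rw [sum_hdeg E huniform] at h
    simpa [card_univ, pow_two] using h
  have f4 : (∑ v, hdeg E v * hdeg E v) = 2 * (bowPairs E).card + 3 * E.card := by
    have h2P : 2 * (bowPairs E).card = ∑ v, hdeg E v * (hdeg E v - 1) := by
      rw [card_bowPairs E hlinear, Finset.mul_sum]
      exact Finset.sum_congr rfl (fun v _ => two_mul_choose_two _)
    have hdd : ∀ v : V, hdeg E v * hdeg E v = hdeg E v * (hdeg E v - 1) + hdeg E v := by
      intro v
      cases h : hdeg E v with
      | zero => rfl
      | succ k => simp only [Nat.succ_sub_one]; ring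
    rw [Finset.sum_congr rfl (fun v _ => hdd v), Finset.sum_add_distrib, ← h2P,
      sum_hdeg E huniform]
  have f5 : 1 ≤ (bowPairs E).card := card_pos.mpr hpairs
  have hn2 : (2:ℝ) ≤ (Fintype.card V : ℝ) := by exact_mod_cast hn
  have hn0 : (0:ℝ) < (Fintype.card V : ℝ) := by linarith
  have hn1 : ((Fintype.card V : ℝ) - 1) ≠ 0 := by intro h; linarith
  have hn0' : (Fintype.card V : ℝ) ≠ 0 := ne_of_gt hn0
  have hP0 : (0:ℝ) < ((bowPairs E).card : ℝ) := by exact_mod_cast f5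
  have hm0 : (0:ℝ) ≤ (E.card : ℝ) := Nat.cast_nonneg _
  have heB0 : (0:ℝ) ≤ (B.edgeFinset.card : ℝ) := Nat.cast_nonneg _
  have hW0 : (0:ℝ) ≤ ((badW E).card : ℝ) := Nat.cast_nonneg _
  have r1 : 8*((bowPairs E).card:ℝ) ≤ 2*(B.edgeFinset.card:ℝ) + ((badW E).card:ℝ) := by
    exact_mod_cast f1
  have r2 : ((badW E).card:ℝ) + 6*(E.card:ℝ) + 4*((∑ v, hdeg E v * hdeg E v : ℕ):ℝ)
      ≤ 6*(E.card:ℝ)*(Fintype.card V:ℝ) := by exact_mod_cast f2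
  have r3 : 3*(E.card:ℝ)*(3*(E.card:ℝ)) ≤ (Fintype.card V:ℝ)*((∑ v, hdeg E v * hdeg E v : ℕ):ℝ) := by
    exact_mod_cast f3
  have r4 : ((∑ v, hdeg E v * hdeg E v : ℕ):ℝ) = 2*((bowPairs E).card:ℝ) + 3*(E.card:ℝ) := by
    exact_mod_cast f4
  have hdn : d * ((Fintype.card V:ℝ) - 1) = 6*(E.card:ℝ)/(Fintype.card V:ℝ) := by
    rw [hd, Nat.cast_choose_two]
    field_simp
    ring
  have hmn : (Fintype.card V:ℝ) < 6*(E.card:ℝ) := by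
    rw [hdn] at hd1
    exact (one_lt_div hn0).mp hd1
  have hden : d * ((Fintype.card V:ℝ) - 1) - 1
      = (6*(E.card:ℝ) - (Fintype.card V:ℝ))/(Fintype.card V:ℝ) := by
    rw [hdn]
    field_simp
  rw [ge_iff_le, hden]
  exact final_arith (Fintype.card V:ℝ) (E.card:ℝ) _ _ _ _ r1 r2 r3 r4 hP0 hm0 heB0 hW0 hn2 hmn
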